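/- Let a, b ≥ 2 be integers and r ≥ 0. Define S(a,b,r) = {m ∈ ℤ_{>0} : ℓ(a,b,m) ≤ r}. Then S(a,b,r) is a truncation set: if m ∈ S(a,b,r) and d is a positive divisor of m, then d ∈ S(a,b,r). -/
import Mathlib


open Set

/-- ℓ(a,b,m): the number of pairs (i,j) of positive integers with a·i + b·j = m. -/
noncomputable def lcount (a b m : ℕ) : ℕ :=
  {q : ℕ × ℕ | 0 < q.1 ∧ 0 < q.2 ∧ a * q.1 + b * q.2 = m}.ncard

/-- The truncation set S(a,b,r). -/
def truncS (a b r : ℕ) : Set ℕ := {m | 0 < m ∧ lcount a b m ≤ r}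

theorem stmt_1 (a b r : ℕ) (ha : 2 ≤ a) (hb : 2 ≤ b) (m d : ℕ)
    (hm : m ∈ truncS a b r) (hd : 0 < d) (hdvd : d ∣ m) : d ∈ truncS a b r := by
  obtain ⟨hmpos, hml⟩ := hm
  refine ⟨hd, le_trans ?_ hml⟩
  unfold lcount
  obtain ⟨k, hk⟩ := hdvd
  have hkpos : 0 < k := by
    rcases Nat.eq_zero_or_pos k with h | h
    · subst h; simp at hk; omega
    · exact h
  -- the target set is finite
  have hfin : {q : ℕ × ℕ | 0 < q.1 ∧ 0 < q.2 ∧ a * q.1 + b * q.2 = m}.Finite := by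
    apply Set.Finite.subset (Set.finite_Icc (0,0) (m,m))
    rintro ⟨i, j⟩ ⟨hi, hj, hsum⟩
    simp only at hi hj hsum
    have hai : a * i ≤ m := by omega
    have hbj : b * j ≤ m := by omega
    have : i ≤ m := le_trans (Nat.le_mul_of_pos_left i (by omega)) hai
    have : j ≤ m := le_trans (Nat.le_mul_of_pos_left j (by omega)) hbj
    constructor <;> simp <;> omega
  apply Set.ncard_le_ncard_of_injOn (fun q => (q.1 * k, q.2 * k)) (ht := hfin)
  · rintro ⟨i, j⟩ ⟨hi, hj, hsum⟩
    refine ⟨Nat.mul_pos hi hkpos, Nat.mul_pos hj hkpos, ?_⟩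
    simp only
    rw [hk, ← hsum]
    ring
  · rintro ⟨i, j⟩ _ ⟨i', j'⟩ _ h
    simp only [Prod.mk.injEq] at h
    have h1 := Nat.eq_of_mul_eq_mul_right hkpos h.1
    have h2 := Nat.eq_of_mul_eq_mul_right hkpos h.2
    simp [h1, h2]
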